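/- arXiv:1604.08418 — 4 statements merged into one kernel-verified Lean document; each statement's English description precedes it below -/
import Mathlib

section
/- Let p1 = Pr(D_{1/1}), p12 = Pr(D_{1/1,2}), q2 = Pr(D_{2/2}), q12 = Pr(D_{2/1,2}) be reals in (0,1] with p12 ≤ p1 and q12 ≤ q2. Define R_1 = {(λ_1,λ_2) : λ_1/p1 + ((p1−p12)/(p1·q12))·λ_2 < 1 and λ_2 < q12} and R_2 = {(λ_1,λ_2) : λ_2/q2 + ((q2−q12)/(q2·p12))·λ_1 < 1 and λ_1 < p12}. Then the union R_1 ∪ R_2 (restricted to the nonnegative quadrant) is a convex set if and only if p12/p1 + q12/q2 ≥ 1. -/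
theorem stability_region_convex_iff
    (p1 p12 q2 q12 : ℝ) (hp1 : p1 ∈ Set.Ioc (0:ℝ) 1) (hp12 : p12 ∈ Set.Ioc (0:ℝ) 1)
    (hq2 : q2 ∈ Set.Ioc (0:ℝ) 1) (hq12 : q12 ∈ Set.Ioc (0:ℝ) 1)
    (h1 : p12 ≤ p1) (h2 : q12 ≤ q2) :
    Convex ℝ ((({p : ℝ × ℝ | p.1 / p1 + ((p1 - p12) / (p1 * q12)) * p.2 < 1 ∧ p.2 < q12} ∪
        {p : ℝ × ℝ | p.2 / q2 + ((q2 - q12) / (q2 * p12)) * p.1 < 1 ∧ p.1 < p12}) ∩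
        {p : ℝ × ℝ | 0 ≤ p.1 ∧ 0 ≤ p.2}))
      ↔ p12 / p1 + q12 / q2 ≥ 1 := by
  obtain ⟨hp1p, hp1l⟩ := hp1
  obtain ⟨hp12p, hp12l⟩ := hp12
  obtain ⟨hq2p, hq2l⟩ := hq2
  obtain ⟨hq12p, hq12l⟩ := hq12
  constructor
  · -- convex → condition
    intro hconv
    by_contra hcond
    push_neg at hcond
    -- hcond : p12 / p1 + q12 / q2 < 1
    set t : ℝ := (q12 / q2 + (1 - p12 / p1)) / 2 with htdef
    have hs : 0 < q12 / q2 := div_pos hq12p hq2p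
    have hup : 0 < p12 / p1 := div_pos hp12p hp1p
    have hsu : q12 / q2 < 1 - p12 / p1 := by linarith
    have ht1 : q12 / q2 < t := by rw [htdef]; linarith
    have ht2 : t < 1 - p12 / p1 := by rw [htdef]; linarith
    have ht0 : 0 < t := lt_trans hs ht1
    have h1t : 0 < 1 - t := by linarith
    have hP : ((p12 / (1 - t), (0:ℝ)) : ℝ × ℝ) ∈
        (({p : ℝ × ℝ | p.1 / p1 + ((p1 - p12) / (p1 * q12)) * p.2 < 1 ∧ p.2 < q12} ∪
        {p : ℝ × ℝ | p.2 / q2 + ((q2 - q12) / (q2 * p12)) * p.1 < 1 ∧ p.1 < p12}) ∩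
        {p : ℝ × ℝ | 0 ≤ p.1 ∧ 0 ≤ p.2}) := by
      constructor
      · left
        constructor
        · simp only [Set.mem_setOf_eq, mul_zero, add_zero]
          rw [div_div, div_lt_one (by positivity)]
          have : p12 / p1 < 1 - t := by linarith
          calc p12 = (p12 / p1) * p1 := by field_simp
          _ < (1 - t) * p1 := by exact mul_lt_mul_of_pos_right this hp1p
        · exact hq12p
      · exact ⟨by positivity, le_refl 0⟩
    have hQ : (((0:ℝ), q12 / t) : ℝ × ℝ) ∈
        (({p : ℝ × ℝ | p.1 / p1 + ((p1 - p12) / (p1 * q12)) * p.2 < 1 ∧ p.2 < q12} ∪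
        {p : ℝ × ℝ | p.2 / q2 + ((q2 - q12) / (q2 * p12)) * p.1 < 1 ∧ p.1 < p12}) ∩
        {p : ℝ × ℝ | 0 ≤ p.1 ∧ 0 ≤ p.2}) := by
      constructor
      · right
        constructor
        · simp only [Set.mem_setOf_eq, mul_zero, add_zero]
          rw [div_div, div_lt_one (by positivity)]
          calc q12 = (q12 / q2) * q2 := by field_simp
          _ < t * q2 := by exact mul_lt_mul_of_pos_right ht1 hq2p
        · exact hp12p
      · exact ⟨le_refl 0, by positivity⟩
    have hmem := hconv hP hQ (le_of_lt h1t) (le_of_lt ht0) (by ring)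
    have hcomb : (1 - t) • ((p12 / (1 - t), (0:ℝ)) : ℝ × ℝ) + t • (((0:ℝ), q12 / t) : ℝ × ℝ)
        = ((p12, q12) : ℝ × ℝ) := by
      have hne1 : (1 - t) ≠ 0 := ne_of_gt h1t
      have hne2 : t ≠ 0 := ne_of_gt ht0
      have c1 : (1 - t) * (p12 / (1 - t)) + t * 0 = p12 := by field_simp; ring
      have c2 : (1 - t) * 0 + t * (q12 / t) = q12 := by field_simp; ring
      rw [Prod.smul_mk, Prod.smul_mk, Prod.mk_add_mk, smul_eq_mul, smul_eq_mul,
        smul_eq_mul, smul_eq_mul, c1, c2]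
    rw [hcomb] at hmem
    obtain ⟨hm, -⟩ := hmem
    rcases hm with h | h
    · exact absurd h.2 (lt_irrefl q12)
    · exact absurd h.2 (lt_irrefl p12)
  · -- condition → convex
    intro hcond
    have hcond' : p1 * q2 ≤ p12 * q2 + q12 * p1 := by
      have : (1:ℝ) ≤ (p12 * q2 + q12 * p1) / (p1 * q2) := by
        have e : p12 / p1 + q12 / q2 = (p12 * q2 + q12 * p1) / (p1 * q2) := by
          field_simp
        rw [← e]; exact hcond
      calc p1 * q2 = 1 * (p1 * q2) := by ring
      _ ≤ ((p12 * q2 + q12 * p1) / (p1 * q2)) * (p1 * q2) := by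
          exact mul_le_mul_of_nonneg_right this (by positivity)
      _ = p12 * q2 + q12 * p1 := by field_simp
    have hset : (({p : ℝ × ℝ | p.1 / p1 + ((p1 - p12) / (p1 * q12)) * p.2 < 1 ∧ p.2 < q12} ∪
        {p : ℝ × ℝ | p.2 / q2 + ((q2 - q12) / (q2 * p12)) * p.1 < 1 ∧ p.1 < p12}) ∩
        {p : ℝ × ℝ | 0 ≤ p.1 ∧ 0 ≤ p.2}) =
        ({p : ℝ × ℝ | p.1 / p1 + ((p1 - p12) / (p1 * q12)) * p.2 < 1} ∩
         ({p : ℝ × ℝ | p.2 / q2 + ((q2 - q12) / (q2 * p12)) * p.1 < 1} ∩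
          ({p : ℝ × ℝ | 0 ≤ p.1} ∩ {p : ℝ × ℝ | 0 ≤ p.2}))) := by
      ext ⟨x, y⟩
      simp only [Set.mem_inter_iff, Set.mem_union, Set.mem_setOf_eq]
      have eL1 : x / p1 + ((p1 - p12) / (p1 * q12)) * y = (x * q12 + (p1 - p12) * y) / (p1 * q12) := by
        field_simp; try ring
      have eL2 : y / q2 + ((q2 - q12) / (q2 * p12)) * x = (y * p12 + (q2 - q12) * x) / (q2 * p12) := by
        field_simp; try ring
      constructor
      · rintro ⟨h | h, hx, hy⟩
        · obtain ⟨hL1, hy2⟩ := h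
          refine ⟨hL1, ?_, hx, hy⟩
          rw [eL1, div_lt_one (by positivity)] at hL1
          rw [eL2, div_lt_one (by positivity)]
          have hb2 : (0:ℝ) ≤ q2 * p12 - (q2 - q12) * p1 := by nlinarith
          have key : q12 * (q2 * p12 - (y * p12 + (q2 - q12) * x)) =
              (q2 - q12) * (p1 * q12 - (x * q12 + (p1 - p12) * y)) +
              (q12 - y) * (q2 * p12 - (q2 - q12) * p1) := by ring
          have hpos : 0 < q12 * (q2 * p12 - (y * p12 + (q2 - q12) * x)) := by
            rw [key]
            rcases eq_or_lt_of_le h2 with heq | hlt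
            · have hz : q2 - q12 = 0 := by linarith
              rw [hz]
              have : (0:ℝ) < (q12 - y) * (q2 * p12 - 0 * p1) := by
                apply mul_pos (by linarith)
                simp; positivity
              linarith [this]
            · have ha : 0 < (q2 - q12) * (p1 * q12 - (x * q12 + (p1 - p12) * y)) :=
                mul_pos (by linarith) (by linarith)
              have hb : 0 ≤ (q12 - y) * (q2 * p12 - (q2 - q12) * p1) :=
                mul_nonneg (by linarith) hb2
              linarith
          by_contra hgoal
          push_neg at hgoal
          nlinarith [mul_nonneg (le_of_lt hq12p) (sub_nonneg.2 hgoal)]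
        · obtain ⟨hL2, hx2⟩ := h
          refine ⟨?_, hL2, hx, hy⟩
          rw [eL2, div_lt_one (by positivity)] at hL2
          rw [eL1, div_lt_one (by positivity)]
          have hb2 : (0:ℝ) ≤ p1 * q12 - (p1 - p12) * q2 := by nlinarith
          have key : p12 * (p1 * q12 - (x * q12 + (p1 - p12) * y)) =
              (p1 - p12) * (q2 * p12 - (y * p12 + (q2 - q12) * x)) +
              (p12 - x) * (p1 * q12 - (p1 - p12) * q2) := by ring
          have hpos : 0 < p12 * (p1 * q12 - (x * q12 + (p1 - p12) * y)) := by
            rw [key]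
            rcases eq_or_lt_of_le h1 with heq | hlt
            · have hz : p1 - p12 = 0 := by linarith
              rw [hz]
              have : (0:ℝ) < (p12 - x) * (p1 * q12 - 0 * q2) := by
                apply mul_pos (by linarith)
                simp; positivity
              linarith [this]
            · have ha : 0 < (p1 - p12) * (q2 * p12 - (y * p12 + (q2 - q12) * x)) :=
                mul_pos (by linarith) (by linarith)
              have hb : 0 ≤ (p12 - x) * (p1 * q12 - (p1 - p12) * q2) :=
                mul_nonneg (by linarith) hb2
              linarith
          by_contra hgoal
          push_neg at hgoal
          nlinarith [mul_nonneg (le_of_lt hp12p) (sub_nonneg.2 hgoal)]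
      · rintro ⟨hL1, hL2, hx, hy⟩
        refine ⟨?_, hx, hy⟩
        by_cases hy2 : y < q12
        · exact Or.inl ⟨hL1, hy2⟩
        · push_neg at hy2
          refine Or.inr ⟨hL2, ?_⟩
          by_contra hx2
          push_neg at hx2
          rw [eL1, div_lt_one (by positivity)] at hL1
          nlinarith [mul_le_mul_of_nonneg_left hy2 (sub_nonneg.2 h1),
            mul_le_mul_of_nonneg_right hx2 (le_of_lt hq12p)]
    rw [hset]
    have l1 : IsLinearMap ℝ (fun p : ℝ × ℝ => p.1 / p1 + ((p1 - p12) / (p1 * q12)) * p.2) := by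
      constructor
      · intro a b; simp [Prod.fst_add, Prod.snd_add]; ring
      · intro c a; simp [Prod.smul_fst, Prod.smul_snd, smul_eq_mul]; ring
    have l2 : IsLinearMap ℝ (fun p : ℝ × ℝ => p.2 / q2 + ((q2 - q12) / (q2 * p12)) * p.1) := by
      constructor
      · intro a b; simp [Prod.fst_add, Prod.snd_add]; ring
      · intro c a; simp [Prod.smul_fst, Prod.smul_snd, smul_eq_mul]; ring
    have lfst : IsLinearMap ℝ (fun p : ℝ × ℝ => p.1) := ⟨fun _ _ => rfl, fun _ _ => rfl⟩
    have lsnd : IsLinearMap ℝ (fun p : ℝ × ℝ => p.2) := ⟨fun _ _ => rfl, fun _ _ => rfl⟩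
    exact (convex_halfSpace_lt l1 1).inter ((convex_halfSpace_lt l2 1).inter
      ((convex_halfSpace_ge lfst 0).inter (convex_halfSpace_ge lsnd 0)))
end

section
/- If p12/p1 + q12/q2 = 1 (with p1, p12, q2, q12 ∈ (0,1], p12 ≤ p1, q12 ≤ q2), then the closure of R_1 ∪ R_2 intersected with the nonnegative quadrant is exactly the triangle {(λ_1, λ_2) : λ_1 ≥ 0, λ_2 ≥ 0, λ_1/p1 + λ_2/q2 ≤ 1}. -/
theorem stability_region_eq_time_sharing_triangle
    (p1 p12 q2 q12 : ℝ) (hp1 : p1 ∈ Set.Ioc (0:ℝ) 1) (hp12 : p12 ∈ Set.Ioc (0:ℝ) 1)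
    (hq2 : q2 ∈ Set.Ioc (0:ℝ) 1) (hq12 : q12 ∈ Set.Ioc (0:ℝ) 1)
    (h1 : p12 ≤ p1) (h2 : q12 ≤ q2)
    (heq : p12 / p1 + q12 / q2 = 1) :
    closure ({p : ℝ × ℝ | p.1 / p1 + ((p1 - p12) / (p1 * q12)) * p.2 < 1 ∧ p.2 < q12} ∪
        {p : ℝ × ℝ | p.2 / q2 + ((q2 - q12) / (q2 * p12)) * p.1 < 1 ∧ p.1 < p12}) ∩
      {p : ℝ × ℝ | 0 ≤ p.1 ∧ 0 ≤ p.2}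
      = {p : ℝ × ℝ | 0 ≤ p.1 ∧ 0 ≤ p.2 ∧ p.1 / p1 + p.2 / q2 ≤ 1} := by
  obtain ⟨hp1pos, _⟩ := hp1
  obtain ⟨hp12pos, _⟩ := hp12
  obtain ⟨hq2pos, _⟩ := hq2
  obtain ⟨hq12pos, _⟩ := hq12
  have key : p12 * q2 + q12 * p1 = p1 * q2 := by
    field_simp at heq; linarith
  have c1 : (p1 - p12) / (p1 * q12) = 1 / q2 := by
    rw [div_eq_div_iff (by positivity) (by positivity)]; nlinarith
  have c2 : (q2 - q12) / (q2 * p12) = 1 / p1 := by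
    rw [div_eq_div_iff (by positivity) (by positivity)]; nlinarith
  have hunion : ({p : ℝ × ℝ | p.1 / p1 + ((p1 - p12) / (p1 * q12)) * p.2 < 1 ∧ p.2 < q12} ∪
        {p : ℝ × ℝ | p.2 / q2 + ((q2 - q12) / (q2 * p12)) * p.1 < 1 ∧ p.1 < p12})
      = {p : ℝ × ℝ | p.1 / p1 + p.2 / q2 < 1} := by
    ext ⟨x, y⟩
    simp only [Set.mem_union, Set.mem_setOf_eq, c1, c2, one_div]
    constructor
    · rintro (⟨h, _⟩ | ⟨h, _⟩)
      · rwa [inv_mul_eq_div] at h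
      · rw [inv_mul_eq_div] at h; linarith
    · intro h
      by_cases hy : y < q12
      · left
        rw [inv_mul_eq_div]
        exact ⟨h, hy⟩
      · right
        push_neg at hy
        have hq12q2 : q12 / q2 ≤ y / q2 := by gcongr
        have hpq : p12 / p1 = 1 - q12 / q2 := by linarith
        have h3 : x / p1 < p12 / p1 := by linarith
        have h4 := mul_lt_mul_of_pos_right h3 hp1pos
        rw [div_mul_cancel₀ _ hp1pos.ne', div_mul_cancel₀ _ hp1pos.ne'] at h4
        rw [inv_mul_eq_div]
        exact ⟨by linarith, h4⟩
  rw [hunion]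
  have hclosure : closure {p : ℝ × ℝ | p.1 / p1 + p.2 / q2 < 1}
      = {p : ℝ × ℝ | p.1 / p1 + p.2 / q2 ≤ 1} := by
    apply subset_antisymm
    · apply closure_lt_subset_le
      · fun_prop
      · fun_prop
    · intro p hp
      have hseq : Filter.Tendsto (fun n : ℕ => ((p.1 - p1 / (n + 1), p.2) : ℝ × ℝ))
          Filter.atTop (nhds p) := by
        have h0 : Filter.Tendsto (fun n : ℕ => p1 / (n + 1)) Filter.atTop (nhds 0) := by
          simpa [div_eq_mul_inv] using (tendsto_one_div_add_atTop_nhds_zero_nat).const_mul p1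
        have : Filter.Tendsto (fun n : ℕ => p.1 - p1 / (n + 1)) Filter.atTop (nhds p.1) := by
          simpa using (tendsto_const_nhds (x := p.1)).sub h0
        exact this.prodMk_nhds tendsto_const_nhds
      refine mem_closure_of_tendsto hseq (Filter.Eventually.of_forall fun n => ?_)
      simp only [Set.mem_setOf_eq]
      have hn : (0:ℝ) < (n:ℝ) + 1 := by positivity
      have h5 : p1 / ((n:ℝ) + 1) / p1 = 1 / ((n:ℝ) + 1) := by
        rw [div_div, mul_comm, ← div_div, div_self hp1pos.ne']
      have : (p.1 - p1 / ((n:ℝ) + 1)) / p1 = p.1 / p1 - 1 / ((n:ℝ) + 1) := by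
        rw [sub_div, h5]
      rw [this]
      have : (0:ℝ) < 1 / ((n:ℝ) + 1) := by positivity
      simp only [Set.mem_setOf_eq] at hp
      linarith
  rw [hclosure]
  ext p
  simp only [Set.mem_inter_iff, Set.mem_setOf_eq]
  tauto
end

section
/- The supremum of λ_1 + λ_2 over the closure of the stability region R = R_1 ∪ R_2 (intersected with the nonnegative quadrant) equals max{q2, p12 + q12, p1}, where p1, p12, q2, q12 ∈ (0,1] with p12 ≤ p1 and q12 ≤ q2. -/
open Filter Topology

theorem max_aggregate_stable_throughput
    (p1 p12 q2 q12 : ℝ) (hp1 : p1 ∈ Set.Ioc (0:ℝ) 1) (hp12 : p12 ∈ Set.Ioc (0:ℝ) 1)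
    (hq2 : q2 ∈ Set.Ioc (0:ℝ) 1) (hq12 : q12 ∈ Set.Ioc (0:ℝ) 1)
    (h1 : p12 ≤ p1) (h2 : q12 ≤ q2) :
    sSup ((fun p : ℝ × ℝ => p.1 + p.2) ''
      (closure (({p : ℝ × ℝ | 0 ≤ p.1 ∧ 0 ≤ p.2} ∩
          {p : ℝ × ℝ | p.1 / p1 + ((p1 - p12) / (p1 * q12)) * p.2 < 1 ∧ p.2 < q12}) ∪
        ({p : ℝ × ℝ | 0 ≤ p.1 ∧ 0 ≤ p.2} ∩
          {p : ℝ × ℝ | p.2 / q2 + ((q2 - q12) / (q2 * p12)) * p.1 < 1 ∧ p.1 < p12})) ∩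
        {p : ℝ × ℝ | 0 ≤ p.1 ∧ 0 ≤ p.2}))
      = max q2 (max (p12 + q12) p1) := by
  obtain ⟨hp1, hp1'⟩ := hp1
  obtain ⟨hp12, hp12'⟩ := hp12
  obtain ⟨hq2, hq2'⟩ := hq2
  obtain ⟨hq12, hq12'⟩ := hq12
  set A : Set (ℝ × ℝ) := {p : ℝ × ℝ | 0 ≤ p.1 ∧ 0 ≤ p.2} ∩
      {p : ℝ × ℝ | p.1 / p1 + ((p1 - p12) / (p1 * q12)) * p.2 < 1 ∧ p.2 < q12} with hA
  set B : Set (ℝ × ℝ) := {p : ℝ × ℝ | 0 ≤ p.1 ∧ 0 ≤ p.2} ∩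
      {p : ℝ × ℝ | p.2 / q2 + ((q2 - q12) / (q2 * p12)) * p.1 < 1 ∧ p.1 < p12} with hB
  -- approach a point from scaled copies
  have hscale : ∀ a b : ℝ, (∀ t : ℝ, 0 ≤ t → t < 1 → ((t*a, t*b) : ℝ × ℝ) ∈ A ∪ B) →
      ((a, b) : ℝ × ℝ) ∈ closure (A ∪ B) := by
    intro a b hmem
    have hc : Tendsto (fun n : ℕ => (1 : ℝ) - 1/(n+1)) atTop (𝓝 1) := by
      simpa using tendsto_one_div_add_atTop_nhds_zero_nat.const_sub (1:ℝ)
    have hf : Tendsto (fun n : ℕ => ((((1:ℝ) - 1/(n+1)) * a, ((1:ℝ) - 1/(n+1)) * b)) : ℕ → ℝ × ℝ)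
        atTop (𝓝 (a, b)) := by
      have h1 : Tendsto (fun n : ℕ => ((1:ℝ) - 1/(n+1)) * a) atTop (𝓝 a) := by
        simpa using hc.mul_const a
      have h2 : Tendsto (fun n : ℕ => ((1:ℝ) - 1/(n+1)) * b) atTop (𝓝 b) := by
        simpa using hc.mul_const b
      exact h1.prodMk_nhds h2
    refine mem_closure_of_tendsto hf (Filter.Eventually.of_forall fun n => ?_)
    apply hmem
    · have : (0:ℝ) < n + 1 := by positivity
      have : 1/((n:ℝ)+1) ≤ 1 := by
        rw [div_le_one (by positivity)]
        linarith [Nat.cast_nonneg (α := ℝ) n]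
      linarith
    · have : (0:ℝ) < 1/((n:ℝ)+1) := by positivity
      linarith
  -- the three corner points are in the closure
  have hcorner1 : ((p1, 0) : ℝ × ℝ) ∈ closure (A ∪ B) := by
    apply hscale
    intro t ht ht1
    left
    refine ⟨⟨by positivity, by simp⟩, ?_, ?_⟩
    · have key : t * p1 / p1 + (p1 - p12) / (p1 * q12) * (t * 0) = t := by
        field_simp
        ring
      rw [key]; exact ht1
    · simpa using hq12
  have hcorner2 : ((0, q2) : ℝ × ℝ) ∈ closure (A ∪ B) := by
    apply hscale
    intro t ht ht1
    right
    refine ⟨⟨by simp, by positivity⟩, ?_, ?_⟩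
    · have key : t * q2 / q2 + (q2 - q12) / (q2 * p12) * (t * 0) = t := by
        field_simp
        ring
      rw [key]; exact ht1
    · simpa using hp12
  have hcorner3 : ((p12, q12) : ℝ × ℝ) ∈ closure (A ∪ B) := by
    apply hscale
    intro t ht ht1
    left
    refine ⟨⟨by positivity, by positivity⟩, ?_, ?_⟩
    · have key : t * p12 / p1 + (p1 - p12) / (p1 * q12) * (t * q12) = t := by
        field_simp
        ring
      rw [key]; exact ht1
    · show t * q12 < q12
      nlinarith [mul_lt_mul_of_pos_right ht1 hq12]
  -- upper bound on closure
  have hub : ∀ z : ℝ × ℝ, z ∈ closure (A ∪ B) → z.1 + z.2 ≤ max q2 (max (p12 + q12) p1) := by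
    intro z hz
    rw [closure_union] at hz
    rcases hz with hz | hz
    · -- closure A ⊆ closed superset
      have hsub : closure A ⊆ {p : ℝ × ℝ | 0 ≤ p.1 ∧ 0 ≤ p.2 ∧
          p.1 / p1 + ((p1 - p12) / (p1 * q12)) * p.2 ≤ 1 ∧ p.2 ≤ q12} := by
        apply closure_minimal
        · rintro p ⟨⟨h1', h2'⟩, h3', h4'⟩
          exact ⟨h1', h2', le_of_lt h3', le_of_lt h4'⟩
        · apply IsClosed.inter (isClosed_le continuous_const continuous_fst)
          apply IsClosed.inter (isClosed_le continuous_const continuous_snd)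
          apply IsClosed.inter
          · exact isClosed_le ((continuous_fst.div_const _).add
              (continuous_const.mul continuous_snd)) continuous_const
          · exact isClosed_le continuous_snd continuous_const
      obtain ⟨hx0, hy0, hline, hycap⟩ := hsub hz
      have hline' : z.1 * q12 + (p1 - p12) * z.2 ≤ p1 * q12 := by
        have hpos : (0:ℝ) < p1 * q12 := by positivity
        have e : z.1 / p1 + (p1 - p12) / (p1 * q12) * z.2
            = (z.1 * q12 + (p1 - p12) * z.2) / (p1 * q12) := by
          field_simp
        rw [e, div_le_one hpos] at hline
        exact hline
      rcases le_total (p1 - p12) q12 with hc | hc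
      · -- x + y ≤ p12 + q12
        have : z.1 + z.2 ≤ p12 + q12 := by
          nlinarith [mul_nonneg hy0 (sub_nonneg.mpr hc), hline', hycap,
            mul_le_mul_of_nonneg_left hycap (sub_nonneg.mpr hc)]
        exact le_trans this (le_trans (le_max_left _ _) (le_max_right _ _))
      · -- x + y ≤ p1
        have : z.1 + z.2 ≤ p1 := by
          nlinarith [mul_nonneg hy0 (sub_nonneg.mpr hc), hline']
        exact le_trans this (le_trans (le_max_right _ _) (le_max_right _ _))
    · have hsub : closure B ⊆ {p : ℝ × ℝ | 0 ≤ p.1 ∧ 0 ≤ p.2 ∧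
          p.2 / q2 + ((q2 - q12) / (q2 * p12)) * p.1 ≤ 1 ∧ p.1 ≤ p12} := by
        apply closure_minimal
        · rintro p ⟨⟨h1', h2'⟩, h3', h4'⟩
          exact ⟨h1', h2', le_of_lt h3', le_of_lt h4'⟩
        · apply IsClosed.inter (isClosed_le continuous_const continuous_fst)
          apply IsClosed.inter (isClosed_le continuous_const continuous_snd)
          apply IsClosed.inter
          · exact isClosed_le ((continuous_snd.div_const _).add
              (continuous_const.mul continuous_fst)) continuous_const
          · exact isClosed_le continuous_fst continuous_const
      obtain ⟨hx0, hy0, hline, hxcap⟩ := hsub hz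
      have hline' : z.2 * p12 + (q2 - q12) * z.1 ≤ q2 * p12 := by
        have hpos : (0:ℝ) < q2 * p12 := by positivity
        have e : z.2 / q2 + (q2 - q12) / (q2 * p12) * z.1
            = (z.2 * p12 + (q2 - q12) * z.1) / (q2 * p12) := by
          field_simp
        rw [e, div_le_one hpos] at hline
        exact hline
      rcases le_total (q2 - q12) p12 with hc | hc
      · have : z.1 + z.2 ≤ p12 + q12 := by
          nlinarith [mul_nonneg hx0 (sub_nonneg.mpr hc), hline', hxcap,
            mul_le_mul_of_nonneg_left hxcap (sub_nonneg.mpr hc)]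
        exact le_trans this (le_trans (le_max_left _ _) (le_max_right _ _))
      · have : z.1 + z.2 ≤ q2 := by
          nlinarith [mul_nonneg hx0 (sub_nonneg.mpr hc), hline']
        exact le_trans this (le_max_left _ _)
  apply IsGreatest.csSup_eq
  constructor
  · -- membership: the max is attained at a corner
    rcases le_total q2 (max (p12 + q12) p1) with hq | hq
    · rcases le_total (p12 + q12) p1 with hpp | hpp
      · refine ⟨(p1, 0), ⟨hcorner1, by constructor <;> simp [le_of_lt hp1]⟩, ?_⟩
        show p1 + 0 = _
        rw [max_eq_right hpp, max_eq_right (by rwa [max_eq_right hpp] at hq)]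
        ring
      · refine ⟨(p12, q12), ⟨hcorner3, ⟨le_of_lt hp12, le_of_lt hq12⟩⟩, ?_⟩
        show p12 + q12 = _
        rw [max_eq_left hpp, max_eq_right (by rwa [max_eq_left hpp] at hq)]
    · refine ⟨(0, q2), ⟨hcorner2, by constructor <;> simp [le_of_lt hq2]⟩, ?_⟩
      show 0 + q2 = _
      rw [max_eq_left hq]
      ring
  · rintro x ⟨z, ⟨hzc, _⟩, rfl⟩
    exact hub z hzc
end

section
/- If p12/p1 + q12/q2 > 1 strictly, then the point (p12, q12) lies strictly above the time-sharing line λ_1/p1 + λ_2/q2 = 1, i.e., p12/p1 + q12/q2 > 1 implies the stability region strictly contains the time-sharing triangle {λ_1/p1 + λ_2/q2 < 1, λ_1, λ_2 ≥ 0}. -/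
theorem stability_region_strictly_contains_time_sharing
    (p1 p12 q2 q12 : ℝ) (hp1 : p1 ∈ Set.Ioc (0:ℝ) 1) (hp12 : p12 ∈ Set.Ioc (0:ℝ) 1)
    (hq2 : q2 ∈ Set.Ioc (0:ℝ) 1) (hq12 : q12 ∈ Set.Ioc (0:ℝ) 1)
    (h1 : p12 ≤ p1) (h2 : q12 ≤ q2)
    (hstrict : p12 / p1 + q12 / q2 > 1) :
    {p : ℝ × ℝ | 0 ≤ p.1 ∧ 0 ≤ p.2 ∧ p.1 / p1 + p.2 / q2 < 1} ⊂
      ({p : ℝ × ℝ | 0 ≤ p.1 ∧ 0 ≤ p.2} ∩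
        ({p : ℝ × ℝ | p.1 / p1 + ((p1 - p12) / (p1 * q12)) * p.2 < 1 ∧ p.2 < q12} ∪
         {p : ℝ × ℝ | p.2 / q2 + ((q2 - q12) / (q2 * p12)) * p.1 < 1 ∧ p.1 < p12})) := by
  obtain ⟨hp1p, hp1le⟩ := hp1
  obtain ⟨hp12p, hp12le⟩ := hp12
  obtain ⟨hq2p, hq2le⟩ := hq2
  obtain ⟨hq12p, hq12le⟩ := hq12
  -- key inequality: p1 * (q2 - q12) < p12 * q2
  have hkey : p1 * (q2 - q12) < p12 * q2 := by
    have h := hstrict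
    rw [gt_iff_lt, div_add_div _ _ (ne_of_gt hp1p) (ne_of_gt hq2p),
      lt_div_iff₀ (by positivity)] at h
    nlinarith
  constructor
  · rintro ⟨x, y⟩ ⟨hx, hy, hxy⟩
    refine ⟨⟨hx, hy⟩, ?_⟩
    by_cases hcase : y < q12
    · left
      refine ⟨?_, hcase⟩
      have hcoef : (p1 - p12) / (p1 * q12) ≤ 1 / q2 := by
        rw [div_le_div_iff₀ (by positivity) hq2p]
        nlinarith
      calc x / p1 + (p1 - p12) / (p1 * q12) * y ≤ x / p1 + (1 / q2) * y := by
            have := mul_le_mul_of_nonneg_right hcoef hy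
            linarith
        _ = x / p1 + y / q2 := by ring
        _ < 1 := hxy
    · right
      push_neg at hcase
      have hxlt : x < p12 := by
        have h1' : x / p1 < 1 - y / q2 := by linarith
        have h2' : 1 - y / q2 ≤ 1 - q12 / q2 :=
          by gcongr
        have h3' : 1 - q12 / q2 < p12 / p1 := by
          rw [show 1 - q12 / q2 = (q2 - q12) / q2 by field_simp, div_lt_div_iff₀ hq2p hp1p]
          nlinarith
        have : x / p1 < p12 / p1 := lt_trans h1' (lt_of_le_of_lt h2' h3')
        exact (div_lt_div_iff_of_pos_right hp1p).mp this
      refine ⟨?_, hxlt⟩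
      have hcoef : (q2 - q12) / (q2 * p12) ≤ 1 / p1 := by
        rw [div_le_div_iff₀ (by positivity) hp1p]
        nlinarith
      calc y / q2 + (q2 - q12) / (q2 * p12) * x ≤ y / q2 + (1 / p1) * x := by
            have := mul_le_mul_of_nonneg_right hcoef hx
            linarith
        _ = x / p1 + y / q2 := by ring
        _ < 1 := hxy
  · -- not superset: witness (p12 - ε, q12 - ε')
    intro hsup
    set s : ℝ := p12 / p1 + q12 / q2 - 1 with hs
    have hspos : 0 < s := by simp [hs]; linarith
    set ε : ℝ := min (p12 / 2) (s * p1 / 2) with hε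
    set ε' : ℝ := min (q12 / 2) (s * q2 / 2) with hε'
    have hεpos : 0 < ε := lt_min (by linarith) (by positivity)
    have hε'pos : 0 < ε' := lt_min (by linarith) (by positivity)
    have hεle : ε ≤ p12 / 2 := min_le_left _ _
    have hε'le : ε' ≤ q12 / 2 := min_le_left _ _
    have hεB : ε ≤ s * p1 / 2 := min_le_right _ _
    have hε'B : ε' ≤ s * q2 / 2 := min_le_right _ _
    have hs1 : p12 / p1 + q12 / q2 = 1 + s := by simp [hs]
    clear_value s ε ε'
    have hεs : ε / p1 ≤ s / 2 := by
      rw [div_le_div_iff₀ hp1p (by norm_num : (0:ℝ) < 2)]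
      linarith
    have hε's : ε' / q2 ≤ s / 2 := by
      rw [div_le_div_iff₀ hq2p (by norm_num : (0:ℝ) < 2)]
      linarith
    have hmem : ((p12 - ε, q12 - ε') : ℝ × ℝ) ∈
        ({p : ℝ × ℝ | 0 ≤ p.1 ∧ 0 ≤ p.2} ∩
        ({p : ℝ × ℝ | p.1 / p1 + ((p1 - p12) / (p1 * q12)) * p.2 < 1 ∧ p.2 < q12} ∪
         {p : ℝ × ℝ | p.2 / q2 + ((q2 - q12) / (q2 * p12)) * p.1 < 1 ∧ p.1 < p12})) := by
      refine ⟨⟨by simp; linarith, by simp; linarith⟩, Or.inr ⟨?_, by simp; linarith⟩⟩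
      show (q12 - ε') / q2 + (q2 - q12) / (q2 * p12) * (p12 - ε) < 1
      have hc : 0 ≤ (q2 - q12) / (q2 * p12) := div_nonneg (by linarith) (by positivity)
      have h3 : (q2 - q12) / (q2 * p12) * (p12 - ε) ≤ (q2 - q12) / (q2 * p12) * p12 := by
        apply mul_le_mul_of_nonneg_left (by linarith) hc
      have h4 : (q2 - q12) / (q2 * p12) * p12 = (q2 - q12) / q2 := by
        field_simp
      have h5 : (q12 - ε') / q2 + (q2 - q12) / q2 = 1 - ε' / q2 := by
        field_simp; ring
      have h6 : 0 < ε' / q2 := by positivity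
      linarith
    have := hsup hmem
    obtain ⟨_, _, hlt⟩ := this
    simp only at hlt
    have : (p12 - ε) / p1 + (q12 - ε') / q2 = p12 / p1 + q12 / q2 - ε / p1 - ε' / q2 := by
      field_simp; ring
    rw [this] at hlt
    have : (1:ℝ) ≤ p12 / p1 + q12 / q2 - ε / p1 - ε' / q2 := by
      have : p12 / p1 + q12 / q2 = 1 + s := by simp [hs]
      linarith
    linarith
end
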